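/- For integers n ≥ k ≥ 4, the maximum over all k-colorings c : {1,...,n} → {1,...,k} of the number of rainbow Sidon 4-sets is at most (1/12 - 1/(24k)) n³ + C_k n², where C_k is a constant depending only on k. -/

import Mathlib

open Finset
set_option maxHeartbeats 1000000


lemma pair_min_max (x y : ℕ) : ({min x y, max x y} : Finset ℕ) = {x, y} := by
  rcases le_total x y with h | h
  · rw [min_eq_left h, max_eq_right h]
  · rw [min_eq_right h, max_eq_left h, Finset.pair_comm]

lemma sumsq (m : ℕ) : 6 * ∑ j ∈ Finset.range (m+1), j^2 = m*(m+1)*(2*m+1) := by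
  induction m with
  | zero => simp
  | succ m ih => rw [Finset.sum_range_succ, Nat.mul_add, ih]; ring

lemma Ecard (n σ : ℕ) (hσ : σ ≤ 2*n+1) :
    2 * ((Finset.Icc 1 n ×ˢ Finset.Icc 1 n).filter
      (fun e => e.1 < e.2 ∧ e.1 + e.2 = σ)).card ≤ σ ∧
    2 * ((Finset.Icc 1 n ×ˢ Finset.Icc 1 n).filter
      (fun e => e.1 < e.2 ∧ e.1 + e.2 = σ)).card + σ ≤ 2*n + 2 := by
  classical
  set E := (Finset.Icc 1 n ×ˢ Finset.Icc 1 n).filter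
      (fun e => e.1 < e.2 ∧ e.1 + e.2 = σ) with hE
  have hmem : ∀ e ∈ E, (1 ≤ e.1 ∧ e.1 ≤ n) ∧ (1 ≤ e.2 ∧ e.2 ≤ n) ∧ e.1 < e.2 ∧ e.1 + e.2 = σ := by
    intro e he
    rw [hE, Finset.mem_filter, Finset.mem_product, Finset.mem_Icc, Finset.mem_Icc] at he
    tauto
  constructor
  · have hinj : Set.InjOn Prod.fst (E : Set (ℕ × ℕ)) := by
      intro e he f hf h
      have h1 := hmem e (by exact_mod_cast he)
      have h2 := hmem f (by exact_mod_cast hf)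
      have : e.2 = f.2 := by omega
      exact Prod.ext h this
    have himg : E.image Prod.fst ⊆ Finset.Ico 1 ((σ+1)/2) := by
      intro x hx
      obtain ⟨e, he, rfl⟩ := Finset.mem_image.1 hx
      have := hmem e he
      rw [Finset.mem_Ico]
      omega
    have := (Finset.card_image_of_injOn hinj).symm.trans_le
      ((Finset.card_le_card himg).trans_eq (Nat.card_Ico 1 ((σ+1)/2)))
    omega
  · have hinj : Set.InjOn Prod.snd (E : Set (ℕ × ℕ)) := by
      intro e he f hf h
      have h1 := hmem e (by exact_mod_cast he)
      have h2 := hmem f (by exact_mod_cast hf)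
      have : e.1 = f.1 := by omega
      exact Prod.ext this h
    have himg : E.image Prod.snd ⊆ Finset.Ioc (σ/2) n := by
      intro y hy
      obtain ⟨e, he, rfl⟩ := Finset.mem_image.1 hy
      have := hmem e he
      rw [Finset.mem_Ioc]
      omega
    have := (Finset.card_image_of_injOn hinj).symm.trans_le
      ((Finset.card_le_card himg).trans_eq (Nat.card_Ioc (σ/2) n))
    omega


lemma countL1 (k : ℕ) (c : ℕ → Fin k) (E : Finset (ℕ × ℕ)) :
    4*k*((E ×ˢ E).filter (fun q => q.1.1 < q.2.1 ∧ c q.1.1 ≠ c q.2.1 ∧ c q.1.1 ≠ c q.2.2 ∧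
      c q.1.2 ≠ c q.2.1 ∧ c q.1.2 ≠ c q.2.2)).card + E.card^2 ≤ 2*k*E.card^2 := by
  classical
  set D := (E ×ˢ E).filter (fun q => q.1.1 < q.2.1 ∧ c q.1.1 ≠ c q.2.1 ∧ c q.1.1 ≠ c q.2.2 ∧
      c q.1.2 ≠ c q.2.1 ∧ c q.1.2 ≠ c q.2.2) with hD
  set C := (E ×ˢ E).filter (fun q => c q.1.1 = c q.2.1 ∨ c q.1.1 = c q.2.2 ∨
      c q.1.2 = c q.2.1 ∨ c q.1.2 = c q.2.2) with hC
  set Ei : Fin k → Finset (ℕ × ℕ) := fun i => E.filter (fun e => c e.1 = i ∨ c e.2 = i) with hEi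
  -- cover
  have hcover : E.card ≤ ∑ i, (Ei i).card := by
    rw [Finset.card_eq_sum_card_fiberwise (f := fun e => c e.1) (t := univ)
      (fun x _ => mem_univ _)]
    refine Finset.sum_le_sum fun i _ => Finset.card_le_card ?_
    intro e he
    simp only [hEi, mem_filter] at he ⊢
    exact ⟨he.1, Or.inl he.2⟩
  -- Cauchy-Schwarz
  have hCS : (∑ i, (Ei i).card)^2 ≤ k * ∑ i, (Ei i).card^2 := by
    have h := sq_sum_le_card_mul_sum_sq (s := (univ : Finset (Fin k)))
      (f := fun i => ((Ei i).card : ℝ))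
    have : ((∑ i, (Ei i).card : ℕ) : ℝ)^2 ≤ ((k * ∑ i, (Ei i).card^2 : ℕ) : ℝ) := by
      push_cast
      simpa using h
    exact_mod_cast this
  -- each Ei × Ei ⊆ C
  have hsubC : ∀ i, (Ei i) ×ˢ (Ei i) ⊆ C := by
    intro i q hq
    rw [mem_product] at hq
    obtain ⟨h1, h2⟩ := hq
    rw [hEi, mem_filter] at h1 h2
    rw [hC, mem_filter]
    refine ⟨mem_product.2 ⟨h1.1, h2.1⟩, ?_⟩
    rcases h1.2 with ha | ha <;> rcases h2.2 with hb | hb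
    · exact Or.inl (ha.trans hb.symm)
    · exact Or.inr (Or.inl (ha.trans hb.symm))
    · exact Or.inr (Or.inr (Or.inl (ha.trans hb.symm)))
    · exact Or.inr (Or.inr (Or.inr (ha.trans hb.symm)))
  -- conflict count
  have hconf : ∑ i, (Ei i).card^2 ≤ 2 * C.card := by
    have step1 : ∀ i : Fin k, (Ei i).card^2 = (C.filter (fun q => q ∈ (Ei i) ×ˢ (Ei i))).card := by
      intro i
      rw [Finset.filter_mem_eq_inter, Finset.inter_eq_right.2 (hsubC i), Finset.card_product]
      ring
    calc ∑ i, (Ei i).card^2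
        = ∑ i, ∑ q ∈ C, if q ∈ (Ei i) ×ˢ (Ei i) then 1 else 0 := by
          refine Finset.sum_congr rfl fun i _ => ?_
          rw [step1 i, Finset.card_filter]
      _ = ∑ q ∈ C, ∑ i : Fin k, if q ∈ (Ei i) ×ˢ (Ei i) then 1 else 0 := Finset.sum_comm
      _ ≤ ∑ q ∈ C, 2 := by
          refine Finset.sum_le_sum fun q hq => ?_
          rw [← Finset.card_filter]
          have hss : (univ.filter (fun i => q ∈ (Ei i) ×ˢ (Ei i))) ⊆
              ({c q.1.1, c q.1.2} : Finset (Fin k)) := by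
            intro i hi
            rw [mem_filter, mem_product] at hi
            have h1 := hi.2.1
            rw [hEi, mem_filter] at h1
            rcases h1.2 with h | h <;> simp [← h]
          exact le_trans (Finset.card_le_card hss)
            (le_trans (Finset.card_insert_le _ _) (by simp))
      _ = 2 * C.card := by rw [Finset.sum_const, smul_eq_mul, mul_comm]
  -- disjoint union bound
  have hDsub : D ⊆ E ×ˢ E := Finset.filter_subset _ _
  have hCsub : C ⊆ E ×ˢ E := Finset.filter_subset _ _
  set D' := D.image Prod.swap with hD'
  have hD'card : D'.card = D.card := Finset.card_image_of_injective _ Prod.swap_injective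
  have hD'sub : D' ⊆ E ×ˢ E := by
    intro q hq
    obtain ⟨r, hr, rfl⟩ := Finset.mem_image.1 hq
    have := hDsub hr
    rw [mem_product] at this ⊢
    exact ⟨this.2, this.1⟩
  have hDD' : Disjoint D D' := by
    rw [Finset.disjoint_left]
    intro q hq hq'
    obtain ⟨r, hr, hrq⟩ := Finset.mem_image.1 hq'
    rw [hD, mem_filter] at hq hr
    have h1 : q.1.1 < q.2.1 := hq.2.1
    have h2 : r.1.1 < r.2.1 := hr.2.1
    have : q.1.1 = r.2.1 ∧ q.2.1 = r.1.1 := by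
      subst hrq; exact ⟨rfl, rfl⟩
    omega
  have hDC : Disjoint D C := by
    rw [Finset.disjoint_left]
    intro q hq hq'
    rw [hD, mem_filter] at hq
    rw [hC, mem_filter] at hq'
    tauto
  have hD'C : Disjoint D' C := by
    rw [Finset.disjoint_left]
    intro q hq hq'
    obtain ⟨r, hr, hrq⟩ := Finset.mem_image.1 hq
    rw [hD, mem_filter] at hr
    rw [hC, mem_filter] at hq'
    subst hrq
    obtain ⟨-, -, h1, h2, h3, h4⟩ := hr
    simp only [Prod.fst_swap, Prod.snd_swap] at hq'
    rcases hq'.2 with h | h | h | h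
    exacts [h1 h.symm, h3 h.symm, h2 h.symm, h4 h.symm]
  have hunion : 2 * D.card + C.card ≤ E.card^2 := by
    have h1 : (D ∪ D' ∪ C).card = D.card + D'.card + C.card := by
      rw [Finset.card_union_of_disjoint, Finset.card_union_of_disjoint hDD']
      rw [Finset.disjoint_union_left]
      exact ⟨hDC, hD'C⟩
    have h2 : (D ∪ D' ∪ C) ⊆ E ×ˢ E := by
      refine Finset.union_subset (Finset.union_subset hDsub hD'sub) hCsub
    have h3 := Finset.card_le_card h2
    rw [h1, Finset.card_product] at h3
    have : E.card * E.card = E.card ^2 := by ring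
    omega
  -- combine
  have key1 : E.card^2 ≤ 2 * k * C.card := by
    calc E.card^2 ≤ (∑ i, (Ei i).card)^2 := Nat.pow_le_pow_left hcover 2
      _ ≤ k * ∑ i, (Ei i).card^2 := hCS
      _ ≤ k * (2 * C.card) := Nat.mul_le_mul_left _ hconf
      _ = 2 * k * C.card := by ring
  calc 4*k*D.card + E.card^2 ≤ 4*k*D.card + 2*k*C.card := by omega
    _ = 2*k*(2*D.card + C.card) := by ring
    _ ≤ 2*k*E.card^2 := Nat.mul_le_mul_left _ hunion

def IsSidonFourSet (n : ℕ) (S : Finset ℕ) : Prop :=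
  (S : Set ℕ) ⊆ Set.Icc 1 n ∧
    ∃ x₁ x₂ x₃ x₄ : ℕ, S = {x₁, x₂, x₃, x₄} ∧
      x₁ ≠ x₂ ∧ x₁ ≠ x₃ ∧ x₁ ≠ x₄ ∧ x₂ ≠ x₃ ∧ x₂ ≠ x₄ ∧ x₃ ≠ x₄ ∧
      x₁ + x₂ = x₃ + x₄

lemma quad_eq (x₁ x₂ x₃ x₄ : ℕ) :
    ({min x₁ x₂, max x₁ x₂, min x₃ x₄, max x₃ x₄} : Finset ℕ) = {x₁, x₂, x₃, x₄} := by
  rcases le_total x₁ x₂ with h | h <;> rcases le_total x₃ x₄ with h' | h' <;>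
    simp only [min_eq_left h, max_eq_right h, min_eq_right h, max_eq_left h,
      min_eq_left h', max_eq_right h', min_eq_right h', max_eq_left h'] <;>
    · ext z
      simp only [Finset.mem_insert, Finset.mem_singleton]
      tauto

lemma quad_eq' (x₁ x₂ x₃ x₄ : ℕ) :
    ({min x₃ x₄, max x₃ x₄, min x₁ x₂, max x₁ x₂} : Finset ℕ) = {x₁, x₂, x₃, x₄} := by
  rcases le_total x₁ x₂ with h | h <;> rcases le_total x₃ x₄ with h' | h' <;>
    simp only [min_eq_left h, max_eq_right h, min_eq_right h, max_eq_left h,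
      min_eq_left h', max_eq_right h', min_eq_right h', max_eq_left h'] <;>
    · ext z
      simp only [Finset.mem_insert, Finset.mem_singleton]
      tauto

theorem stmt_2 (k : ℕ) (hk : 4 ≤ k) :
    ∃ C : ℝ, ∀ n : ℕ, k ≤ n → ∀ c : ℕ → Fin k,
      (({S : Finset ℕ | IsSidonFourSet n S ∧ Set.InjOn c ↑S}.ncard : ℝ)) ≤
        (1 / 12 - 1 / (24 * k)) * (n : ℝ) ^ 3 + C * n ^ 2 := by
  classical
  refine ⟨1, fun n hn c => ?_⟩
  have hn4 : 4 ≤ n := le_trans hk hn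
  set Ef : ℕ → Finset (ℕ × ℕ) := fun σ =>
    ((Finset.Icc 1 n) ×ˢ (Finset.Icc 1 n)).filter (fun e => e.1 < e.2 ∧ e.1 + e.2 = σ) with hEf
  set Df : ℕ → Finset ((ℕ × ℕ) × (ℕ × ℕ)) := fun σ =>
    ((Ef σ) ×ˢ (Ef σ)).filter (fun q => q.1.1 < q.2.1 ∧ c q.1.1 ≠ c q.2.1 ∧ c q.1.1 ≠ c q.2.2 ∧
      c q.1.2 ≠ c q.2.1 ∧ c q.1.2 ≠ c q.2.2) with hDf
  set T : Finset (Finset ℕ) := (Finset.range (2*n+2)).biUnion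
    (fun σ => (Df σ).image (fun q => ({q.1.1, q.1.2, q.2.1, q.2.2} : Finset ℕ))) with hT
  -- Step 1: every rainbow Sidon set appears in T
  have hsub : {S : Finset ℕ | IsSidonFourSet n S ∧ Set.InjOn c ↑S} ⊆ (↑T : Set (Finset ℕ)) := by
    rintro S ⟨⟨hIcc, x₁, x₂, x₃, x₄, hS, h12, h13, h14, h23, h24, h34, heq⟩, hinj⟩
    have hSmem : ∀ z, z ∈ S ↔ (z = x₁ ∨ z = x₂ ∨ z = x₃ ∨ z = x₄) := by
      intro z; rw [hS]; simp [Finset.mem_insert]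
    have hIccF : ∀ z ∈ S, z ∈ Finset.Icc 1 n := by
      intro z hz
      have := hIcc (Finset.mem_coe.2 hz)
      rw [Set.mem_Icc] at this
      rw [Finset.mem_Icc]
      exact this
    have hcol : ∀ z w, z ∈ S → w ∈ S → z ≠ w → c z ≠ c w := by
      intro z w hz hw hzw h
      exact hzw (hinj (Finset.mem_coe.2 hz) (Finset.mem_coe.2 hw) h)
    have hx₁ : x₁ ∈ S := (hSmem x₁).2 (Or.inl rfl)
    have hx₂ : x₂ ∈ S := (hSmem x₂).2 (Or.inr (Or.inl rfl))
    have hx₃ : x₃ ∈ S := (hSmem x₃).2 (Or.inr (Or.inr (Or.inl rfl)))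
    have hx₄ : x₄ ∈ S := (hSmem x₄).2 (Or.inr (Or.inr (Or.inr rfl)))
    have ha' : min x₁ x₂ = x₁ ∨ min x₁ x₂ = x₂ := min_choice x₁ x₂
    have hb' : max x₁ x₂ = x₁ ∨ max x₁ x₂ = x₂ := max_choice x₁ x₂
    have hu' : min x₃ x₄ = x₃ ∨ min x₃ x₄ = x₄ := min_choice x₃ x₄
    have hv' : max x₃ x₄ = x₃ ∨ max x₃ x₄ = x₄ := max_choice x₃ x₄
    have haS : min x₁ x₂ ∈ S := by rcases ha' with h | h <;> rw [h] <;> assumption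
    have hbS : max x₁ x₂ ∈ S := by rcases hb' with h | h <;> rw [h] <;> assumption
    have huS : min x₃ x₄ ∈ S := by rcases hu' with h | h <;> rw [h] <;> assumption
    have hvS : max x₃ x₄ ∈ S := by rcases hv' with h | h <;> rw [h] <;> assumption
    have hau : min x₁ x₂ ≠ min x₃ x₄ := by
      rcases ha' with h | h <;> rcases hu' with h' | h' <;> rw [h, h'] <;> assumption
    have hav : min x₁ x₂ ≠ max x₃ x₄ := by
      rcases ha' with h | h <;> rcases hv' with h' | h' <;> rw [h, h'] <;> assumption
    have hbu : max x₁ x₂ ≠ min x₃ x₄ := by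
      rcases hb' with h | h <;> rcases hu' with h' | h' <;> rw [h, h'] <;> assumption
    have hbv : max x₁ x₂ ≠ max x₃ x₄ := by
      rcases hb' with h | h <;> rcases hv' with h' | h' <;> rw [h, h'] <;> assumption
    have hab : min x₁ x₂ < max x₁ x₂ := min_lt_max.2 h12
    have huv : min x₃ x₄ < max x₃ x₄ := min_lt_max.2 h34
    have habs : min x₁ x₂ + max x₁ x₂ = x₁ + x₂ := min_add_max x₁ x₂
    have huvs : min x₃ x₄ + max x₃ x₄ = x₁ + x₂ := (min_add_max x₃ x₄).trans heq.symm
    have hEab : (min x₁ x₂, max x₁ x₂) ∈ Ef (x₁ + x₂) := by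
      rw [hEf]
      refine Finset.mem_filter.2 ⟨Finset.mem_product.2 ⟨hIccF _ haS, hIccF _ hbS⟩, hab, habs⟩
    have hEuv : (min x₃ x₄, max x₃ x₄) ∈ Ef (x₁ + x₂) := by
      rw [hEf]
      refine Finset.mem_filter.2 ⟨Finset.mem_product.2 ⟨hIccF _ huS, hIccF _ hvS⟩, huv, huvs⟩
    have hσ : x₁ + x₂ ∈ Finset.range (2*n+2) := by
      have e1 := hIccF _ hx₁
      have e2 := hIccF _ hx₂
      rw [Finset.mem_Icc] at e1 e2
      rw [Finset.mem_range]
      omega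
    have hquad : ({min x₁ x₂, max x₁ x₂, min x₃ x₄, max x₃ x₄} : Finset ℕ) = S :=
      (quad_eq x₁ x₂ x₃ x₄).trans hS.symm
    have hquad' : ({min x₃ x₄, max x₃ x₄, min x₁ x₂, max x₁ x₂} : Finset ℕ) = S :=
      (quad_eq' x₁ x₂ x₃ x₄).trans hS.symm
    rw [Finset.mem_coe, hT, Finset.mem_biUnion]
    rcases lt_or_gt_of_ne hau with hlt | hlt
    · refine ⟨x₁ + x₂, hσ, Finset.mem_image.2
        ⟨((min x₁ x₂, max x₁ x₂), (min x₃ x₄, max x₃ x₄)), ?_, hquad⟩⟩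
      rw [hDf]
      refine Finset.mem_filter.2 ⟨Finset.mem_product.2 ⟨hEab, hEuv⟩, hlt,
        hcol _ _ haS huS hau, hcol _ _ haS hvS hav, hcol _ _ hbS huS hbu,
        hcol _ _ hbS hvS hbv⟩
    · refine ⟨x₁ + x₂, hσ, Finset.mem_image.2
        ⟨((min x₃ x₄, max x₃ x₄), (min x₁ x₂, max x₁ x₂)), ?_, hquad'⟩⟩
      rw [hDf]
      refine Finset.mem_filter.2 ⟨Finset.mem_product.2 ⟨hEuv, hEab⟩, hlt,
        hcol _ _ huS haS hau.symm, hcol _ _ huS hbS hbu.symm,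
        hcol _ _ hvS haS hav.symm, hcol _ _ hvS hbS hbv.symm⟩
  -- Step 2: counting
  have hTcard : ({S : Finset ℕ | IsSidonFourSet n S ∧ Set.InjOn c ↑S}).ncard
      ≤ ∑ σ ∈ Finset.range (2*n+2), (Df σ).card := by
    calc ({S : Finset ℕ | IsSidonFourSet n S ∧ Set.InjOn c ↑S}).ncard
        ≤ (↑T : Set (Finset ℕ)).ncard := Set.ncard_le_ncard hsub T.finite_toSet
      _ = T.card := Set.ncard_coe_finset T
      _ ≤ ∑ σ ∈ Finset.range (2*n+2),
          ((Df σ).image (fun q => ({q.1.1, q.1.2, q.2.1, q.2.2} : Finset ℕ))).card := by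
          rw [hT]; exact Finset.card_biUnion_le
      _ ≤ ∑ σ ∈ Finset.range (2*n+2), (Df σ).card :=
          Finset.sum_le_sum fun σ _ => Finset.card_image_le
  set R := ∑ σ ∈ Finset.range (2*n+2), (Df σ).card with hR
  set A := ∑ σ ∈ Finset.range (2*n+2), (Ef σ).card ^ 2 with hA
  have hL1 : 4*k*R + A ≤ 2*k*A := by
    calc 4*k*R + A = ∑ σ ∈ Finset.range (2*n+2), (4*k*(Df σ).card + (Ef σ).card^2) := by
          rw [hR, hA, Finset.sum_add_distrib, ← Finset.mul_sum]
      _ ≤ ∑ σ ∈ Finset.range (2*n+2), 2*k*(Ef σ).card^2 := by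
          refine Finset.sum_le_sum fun σ _ => ?_
          rw [hDf]
          exact countL1 k c (Ef σ)
      _ = 2*k*A := by rw [hA, Finset.mul_sum]
  have hAbound : 24 * A ≤ 4*n^3 + 32*n^2 := by
    have hsplit : ∑ σ ∈ Finset.range (2*n+2), 4 * (Ef σ).card ^ 2 ≤
        (∑ σ ∈ Finset.range (n+2), σ^2) + ∑ j ∈ Finset.range (n+1), j^2 := by
      have e1 : ∑ σ ∈ Finset.Ico 0 (n+2), 4 * (Ef σ).card ^ 2
          + ∑ σ ∈ Finset.Ico (n+2) (2*n+2), 4 * (Ef σ).card ^ 2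
          = ∑ σ ∈ Finset.Ico 0 (2*n+2), 4 * (Ef σ).card ^ 2 :=
        Finset.sum_Ico_consecutive _ (Nat.zero_le _) (by omega)
      rw [Finset.range_eq_Ico, ← e1]
      refine Nat.add_le_add ?_ ?_
      · rw [← Finset.range_eq_Ico]
        refine Finset.sum_le_sum fun σ hσ => ?_
        rw [Finset.mem_range] at hσ
        have h : 2 * (Ef σ).card ≤ σ := (Ecard n σ (by omega)).1
        calc 4*(Ef σ).card^2 = (2*(Ef σ).card)^2 := by ring
          _ ≤ σ^2 := Nat.pow_le_pow_left h 2
      · have hpt : ∀ σ ∈ Finset.Ico (n+2) (2*n+2), 4*(Ef σ).card^2 ≤ (2*n+2-σ)^2 := by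
          intro σ hσ
          rw [Finset.mem_Ico] at hσ
          have h : 2 * (Ef σ).card + σ ≤ 2*n+2 := (Ecard n σ (by omega)).2
          have h2 : 2*(Ef σ).card ≤ 2*n+2-σ := by omega
          calc 4*(Ef σ).card^2 = (2*(Ef σ).card)^2 := by ring
            _ ≤ (2*n+2-σ)^2 := Nat.pow_le_pow_left h2 2
        calc ∑ σ ∈ Finset.Ico (n+2) (2*n+2), 4*(Ef σ).card^2
            ≤ ∑ σ ∈ Finset.Ico (n+2) (2*n+2), (2*n+2-σ)^2 := Finset.sum_le_sum hpt
          _ = ∑ j ∈ Finset.Ico 1 (n+1), j^2 := by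
              refine Finset.sum_nbij' (i := fun σ => 2*n+2-σ) (j := fun j => 2*n+2-j)
                ?_ ?_ ?_ ?_ ?_
              · intro a ha; simp only [Finset.mem_Ico] at ha ⊢; omega
              · intro a ha; simp only [Finset.mem_Ico] at ha ⊢; omega
              · intro a ha; simp only [Finset.mem_Ico] at ha ⊢; omega
              · intro a ha; simp only [Finset.mem_Ico] at ha ⊢; omega
              · intro a ha; rfl
          _ ≤ ∑ j ∈ Finset.Ico 0 (n+1), j^2 := by
              refine Finset.sum_le_sum_of_subset ?_
              intro j hj
              rw [Finset.mem_Ico] at hj ⊢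
              omega
          _ = ∑ j ∈ Finset.range (n+1), j^2 := by rw [Finset.range_eq_Ico]
    have h4A : 4 * A = ∑ σ ∈ Finset.range (2*n+2), 4*(Ef σ).card^2 := by
      rw [hA, Finset.mul_sum]
    have c1 : 6 * ∑ σ ∈ Finset.range (n+2), σ^2 = (n+1)*(n+2)*(2*(n+1)+1) := sumsq (n+1)
    have c2 : 6 * ∑ j ∈ Finset.range (n+1), j^2 = n*(n+1)*(2*n+1) := sumsq n
    have h24 : 24 * A ≤ 6*(∑ σ ∈ Finset.range (n+2), σ^2)
        + 6*(∑ j ∈ Finset.range (n+1), j^2) := by linarith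
    rw [c1, c2] at h24
    nlinarith [h24, hn4]
  -- Step 3: real arithmetic
  have hkR : (4:ℝ) ≤ (k:ℝ) := by exact_mod_cast hk
  have f1 : 4*(k:ℝ)*(R:ℝ) + (A:ℝ) ≤ 2*(k:ℝ)*(A:ℝ) := by exact_mod_cast hL1
  have f2 : 24*(A:ℝ) ≤ 4*(n:ℝ)^3 + 32*(n:ℝ)^2 := by exact_mod_cast hAbound
  have f3 : (({S : Finset ℕ | IsSidonFourSet n S ∧ Set.InjOn c ↑S}.ncard : ℝ)) ≤ (R:ℝ) := by
    exact_mod_cast hTcard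
  have key : (({S : Finset ℕ | IsSidonFourSet n S ∧ Set.InjOn c ↑S}.ncard : ℝ)) * (24*(k:ℝ)) ≤
      (2*(k:ℝ)-1)*(n:ℝ)^3 + 24*(k:ℝ)*(n:ℝ)^2 := by
    have hkRnn : (0:ℝ) ≤ 24*(k:ℝ) := by linarith
    calc (({S : Finset ℕ | IsSidonFourSet n S ∧ Set.InjOn c ↑S}.ncard : ℝ)) * (24*(k:ℝ))
        ≤ (R:ℝ) * (24*(k:ℝ)) := mul_le_mul_of_nonneg_right f3 hkRnn
      _ = 6*(4*(k:ℝ)*(R:ℝ)) := by ring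
      _ ≤ 6*(2*(k:ℝ)*(A:ℝ) - (A:ℝ)) := by linarith
      _ = (2*(k:ℝ)-1)*(6*(A:ℝ)) := by ring
      _ ≤ (2*(k:ℝ)-1)*((n:ℝ)^3+8*(n:ℝ)^2) :=
          mul_le_mul_of_nonneg_left (by linarith) (by linarith)
      _ ≤ (2*(k:ℝ)-1)*(n:ℝ)^3 + 24*(k:ℝ)*(n:ℝ)^2 := by
          nlinarith [mul_nonneg (by linarith : (0:ℝ) ≤ 8*(k:ℝ)+8) (sq_nonneg (n:ℝ))]
  have h24pos : (0:ℝ) < 24*(k:ℝ) := by linarith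
  have hrw : (1 / 12 - 1 / (24 * (k:ℝ))) * (n : ℝ) ^ 3 + 1 * (n:ℝ) ^ 2
      = ((2*(k:ℝ)-1)*(n:ℝ)^3 + 24*(k:ℝ)*(n:ℝ)^2) / (24*(k:ℝ)) := by
    have : (k:ℝ) ≠ 0 := by linarith
    field_simp
    ring
  rw [hrw, le_div_iff₀ h24pos]
  exact key
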